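/- If A ∈ End(ℂ^n) satisfies the reflection equation with the standard Uq(gl(n)) braid matrix S (q generic, i.e. q² ∉ {0,1}), then for all distinct indices i, m, n' with m ≠ n', one has A^m_i A^{n'}_i = 0 and A^i_m A^i_{n'} = 0; that is, A has at most one nonzero off-diagonal entry in every row and every column. -/
import Mathlib

open Matrix Kronecker

/-- The coefficient `s_{ik}`: `q - q⁻¹` if `i < k`, `q` if `i = k`, `0` if `i > k`. -/
noncomputable def sCoeff {n : ℕ} (q : ℂ) (i k : Fin n) : ℂ :=
  if (i : ℕ) < (k : ℕ) then q - q⁻¹ else if i = k then q else 0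

/-- The standard `U_q(gl(n))` braid matrix
`S = Σ_{i,k} s_{ik} e^i_i ⊗ e^k_k + Σ_{i≠j} e^i_j ⊗ e^j_i` on `ℂ^n ⊗ ℂ^n`. -/
noncomputable def braidS (n : ℕ) (q : ℂ) :
    Matrix (Fin n × Fin n) (Fin n × Fin n) ℂ :=
  fun p r =>
    (if p.1 = r.1 ∧ p.2 = r.2 then sCoeff q p.1 p.2 else 0) +
    (if p.1 ≠ p.2 ∧ r.1 = p.2 ∧ r.2 = p.1 then 1 else 0)

/-- `A₂ = 1 ⊗ A` on `ℂ^n ⊗ ℂ^n`. -/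
noncomputable def A2 {n : ℕ} (A : Matrix (Fin n) (Fin n) ℂ) :
    Matrix (Fin n × Fin n) (Fin n × Fin n) ℂ :=
  (1 : Matrix (Fin n) (Fin n) ℂ) ⊗ₖ A

/-- The reflection equation `S A₂ S A₂ = A₂ S A₂ S`. -/
noncomputable def RE (n : ℕ) (q : ℂ) (A : Matrix (Fin n) (Fin n) ℂ) : Prop :=
  braidS n q * A2 A * braidS n q * A2 A = A2 A * braidS n q * A2 A * braidS n q

lemma sCoeff_diag {n : ℕ} (q : ℂ) (i : Fin n) : sCoeff q i i = q := by
  simp [sCoeff]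

lemma sCoeff_lower {n : ℕ} (q : ℂ) {a b : Fin n} (hab : (a : ℕ) < (b : ℕ)) :
    sCoeff q b a = 0 := by
  have h1 : ¬ ((b : ℕ) < (a : ℕ)) := by omega
  have h2 : b ≠ a := by intro h; subst h; omega
  simp [sCoeff, h1, h2]

/-- `S u (i,i) = δ_{u,(i,i)} q`. -/
lemma braidS_apply_diag_right {n : ℕ} (q : ℂ) (i : Fin n) (u : Fin n × Fin n) :
    braidS n q u (i, i) = if u = (i, i) then q else 0 := by
  obtain ⟨u1, u2⟩ := u
  simp only [braidS, Prod.mk.injEq]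
  by_cases h1 : u1 = i <;> by_cases h2 : u2 = i <;>
    simp_all [sCoeff_diag, eq_comm]

/-- `S (i,i) u = δ_{u,(i,i)} q`. -/
lemma braidS_apply_diag_left {n : ℕ} (q : ℂ) (i : Fin n) (u : Fin n × Fin n) :
    braidS n q (i, i) u = if u = (i, i) then q else 0 := by
  obtain ⟨u1, u2⟩ := u
  simp only [braidS, Prod.mk.injEq]
  by_cases h1 : u1 = i <;> by_cases h2 : u2 = i <;>
    simp_all [sCoeff_diag, eq_comm]

/-- `S u (b,a) = δ_{u,(a,b)}` when `a < b`. -/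
lemma braidS_apply_lower_right {n : ℕ} (q : ℂ) {a b : Fin n}
    (hab : (a : ℕ) < (b : ℕ)) (u : Fin n × Fin n) :
    braidS n q u (b, a) = if u = (a, b) then 1 else 0 := by
  obtain ⟨u1, u2⟩ := u
  have hba : a ≠ b := by intro h; subst h; omega
  show (if u1 = b ∧ u2 = a then sCoeff q u1 u2 else 0) +
      (if u1 ≠ u2 ∧ b = u2 ∧ a = u1 then 1 else 0) = _
  have hz : (if u1 = b ∧ u2 = a then sCoeff q u1 u2 else 0) = 0 := by
    split_ifs with h
    · obtain ⟨h1, h2⟩ := h; subst h1; subst h2; exact sCoeff_lower q hab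
    · rfl
  rw [hz, zero_add]
  simp only [Prod.mk.injEq]
  have hc : (u1 ≠ u2 ∧ b = u2 ∧ a = u1) ↔ (u1 = a ∧ u2 = b) := by
    constructor
    · rintro ⟨_, hb, ha⟩; exact ⟨ha.symm, hb.symm⟩
    · rintro ⟨ha, hb⟩; subst ha; subst hb; exact ⟨hba, rfl, rfl⟩
  exact if_congr hc rfl rfl

/-- `S (b,a) u = δ_{u,(a,b)}` when `a < b`. -/
lemma braidS_apply_lower_left {n : ℕ} (q : ℂ) {a b : Fin n}
    (hab : (a : ℕ) < (b : ℕ)) (u : Fin n × Fin n) :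
    braidS n q (b, a) u = if u = (a, b) then 1 else 0 := by
  obtain ⟨u1, u2⟩ := u
  have hba : a ≠ b := by intro h; subst h; omega
  show (if b = u1 ∧ a = u2 then sCoeff q b a else 0) +
      (if b ≠ a ∧ u1 = a ∧ u2 = b then 1 else 0) = _
  rw [sCoeff_lower q hab]
  simp only [Prod.mk.injEq, ite_self, zero_add]
  have hc : (b ≠ a ∧ u1 = a ∧ u2 = b) ↔ (u1 = a ∧ u2 = b) := by
    constructor
    · rintro ⟨_, h1, h2⟩; exact ⟨h1, h2⟩
    · rintro ⟨h1, h2⟩; exact ⟨fun h => hba h.symm, h1, h2⟩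
  exact if_congr hc rfl rfl

/-- `(S·A₂)(x,t)(c,d) = δ_{t,c} A x d` when `x ≠ c`. -/
lemma SA2_apply {n : ℕ} (q : ℂ) (A : Matrix (Fin n) (Fin n) ℂ) (x t c d : Fin n)
    (hxc : x ≠ c) :
    (braidS n q * A2 A) (x, t) (c, d) = if t = c then A x d else 0 := by
  rw [Matrix.mul_apply, Fintype.sum_prod_type]
  simp only [braidS, A2, Matrix.kroneckerMap_apply, Matrix.one_apply, add_mul, ite_mul, one_mul,
    zero_mul, mul_ite, mul_zero, mul_one, ite_and, Finset.sum_add_distrib,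
    Finset.sum_ite_eq, Finset.sum_ite_eq', Finset.mem_univ, if_true]
  split_ifs <;> simp_all [eq_comm]

/-- `(S·A₂)(b,a)(u) = δ_{u₁,a} A b u₂` when `a < b`. -/
lemma SA2_apply_lower {n : ℕ} (q : ℂ) (A : Matrix (Fin n) (Fin n) ℂ) {a b : Fin n}
    (hab : (a : ℕ) < (b : ℕ)) (u1 u2 : Fin n) :
    (braidS n q * A2 A) (b, a) (u1, u2) = if u1 = a then A b u2 else 0 := by
  rw [Matrix.mul_apply]
  simp only [braidS_apply_lower_left q hab, ite_mul, zero_mul, one_mul,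
    Finset.sum_ite_eq, Finset.mem_univ, if_true]
  by_cases h : u1 = a <;> simp [A2, Matrix.one_apply, h, eq_comm]

/-- `(A₂·(S·A₂))(x,y)(c,d) = A y c · A x d` when `x ≠ c`. -/
lemma A2SA2_apply {n : ℕ} (q : ℂ) (A : Matrix (Fin n) (Fin n) ℂ) (x y c d : Fin n)
    (hxc : x ≠ c) :
    (A2 A * (braidS n q * A2 A)) (x, y) (c, d) = A y c * A x d := by
  rw [Matrix.mul_apply]
  have key : ∀ u : Fin n × Fin n,
      A2 A (x, y) u * (braidS n q * A2 A) u (c, d) =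
        if u = (x, c) then A y c * A x d else 0 := by
    rintro ⟨v1, v2⟩
    simp only [Prod.mk.injEq]
    by_cases h : v1 = x
    · subst h
      rw [SA2_apply q A v1 v2 c d hxc]
      simp only [A2, Matrix.kroneckerMap_apply, Matrix.one_apply_eq, one_mul, true_and]
      split_ifs <;> simp_all [mul_comm]
    · have h' : x ≠ v1 := fun hh => h hh.symm
      simp [A2, Matrix.one_apply, h', h]
  simp only [key, Finset.sum_ite_eq', Finset.mem_univ, if_true]

lemma RE_key {n : ℕ} (q : ℂ) (hq1 : q ≠ 1) (A : Matrix (Fin n) (Fin n) ℂ)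
    (hA : RE n q A) {i a b : Fin n} (hab : (a : ℕ) < (b : ℕ))
    (hai : a ≠ i) (hbi : b ≠ i) :
    A a i * A b i = 0 ∧ A i a * A i b = 0 := by
  unfold RE at hA
  rw [mul_assoc (braidS n q * A2 A) (braidS n q) (A2 A),
    mul_assoc (A2 A) (braidS n q) (A2 A)] at hA
  constructor
  · -- column relation: entry at ((b,a),(i,i))
    have h := congrFun (congrFun hA (b, a)) (i, i)
    have hL : (braidS n q * A2 A * (braidS n q * A2 A)) (b, a) (i, i) = A b i * A a i := by
      rw [Matrix.mul_apply]
      have key : ∀ u : Fin n × Fin n,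
          (braidS n q * A2 A) (b, a) u * (braidS n q * A2 A) u (i, i) =
            if u = (a, i) then A b i * A a i else 0 := by
        rintro ⟨u1, u2⟩
        simp only [Prod.mk.injEq]
        rw [SA2_apply_lower q A hab]
        by_cases h1 : u1 = a
        · subst h1
          rw [SA2_apply q A u1 u2 i i hai]
          split_ifs <;> simp_all
        · simp [h1]
      simp only [key, Finset.sum_ite_eq', Finset.mem_univ, if_true]
    have hR : (A2 A * (braidS n q * A2 A) * braidS n q) (b, a) (i, i) =
        A a i * A b i * q := by
      rw [Matrix.mul_apply]
      simp only [braidS_apply_diag_right q i, mul_ite, mul_zero,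
        Finset.sum_ite_eq', Finset.mem_univ, if_true]
      rw [A2SA2_apply q A b a i i hbi]
    rw [hL, hR] at h
    have h0 : A a i * A b i * (1 - q) = 0 := by linear_combination h
    rcases mul_eq_zero.mp h0 with h0 | h0
    · exact h0
    · exact absurd (by linear_combination -h0) hq1
  · -- row relation: entry at ((i,i),(b,a))
    rw [mul_assoc (braidS n q) (A2 A) (braidS n q * A2 A)] at hA
    have h := congrFun (congrFun hA (i, i)) (b, a)
    have hL : (braidS n q * (A2 A * (braidS n q * A2 A))) (i, i) (b, a) =
        q * (A i b * A i a) := by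
      rw [Matrix.mul_apply]
      simp only [braidS_apply_diag_left q i, ite_mul, zero_mul,
        Finset.sum_ite_eq, Finset.sum_ite_eq', Finset.mem_univ, if_true]
      rw [A2SA2_apply q A i i b a hbi.symm]
    have hR : (A2 A * (braidS n q * A2 A) * braidS n q) (i, i) (b, a) =
        A i a * A i b := by
      rw [Matrix.mul_apply]
      simp only [braidS_apply_lower_right q hab, mul_ite, mul_zero, mul_one,
        Finset.sum_ite_eq', Finset.mem_univ, if_true]
      rw [A2SA2_apply q A i i a b hai.symm]
    rw [hL, hR] at h
    have h0 : A i a * A i b * (1 - q) = 0 := by linear_combination -h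
    rcases mul_eq_zero.mp h0 with h0 | h0
    · exact h0
    · exact absurd (by linear_combination -h0) hq1

/-- A solution of the reflection equation has at most one nonzero off-diagonal
entry in each row and each column: for distinct `i, m, k`,
`A^m_i A^k_i = 0` and `A^i_m A^i_k = 0`. -/
theorem RE_row_column (n : ℕ) (hn : 1 ≤ n) (q : ℂ) (hq : q ≠ 0) (hq2 : q ^ 2 ≠ 1)
    (A : Matrix (Fin n) (Fin n) ℂ) (hA : RE n q A)
    (i m k : Fin n) (hmk : m ≠ k) (hmi : m ≠ i) (hki : k ≠ i) :
    A m i * A k i = 0 ∧ A i m * A i k = 0 := by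
  have hq1 : q ≠ 1 := by
    intro h; subst h; exact hq2 (one_pow 2)
  rcases lt_or_gt_of_ne (fun h : (m : ℕ) = (k : ℕ) => hmk (Fin.ext h)) with hlt | hgt
  · exact RE_key q hq1 A hA hlt hmi hki
  · obtain ⟨h1, h2⟩ := RE_key q hq1 A hA hgt hki hmi
    exact ⟨by rw [mul_comm]; exact h1, by rw [mul_comm]; exact h2⟩
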